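/- Let Y ⊆ ℝ^d be closed convex, I finite, the constraints f_i, F̂_i : Y → ℝ continuous and convex for i ∈ I. Let γ > 0 and assume there exists y ∈ Y with f_i(y) < −γ for all i (so y is interior to X_{−γ} := {x ∈ Y : f_i(x) ≤ −γ ∀i}), and let y* minimize f over X_{−γ}. Set X := {x∈Y : f_i(x) ≤ 0 ∀i}, X̂ := {x∈Y : F̂_i(x) ≤ ε̂_i ∀i}, Δ̂_i(0) := max(0, sup{−F̂_i(x) : x ∈ X, f_i(x) = 0}), δ̂_i(z) := max(0, F̂_i(z) − f_i(z)), and Δ̂_0(y*|0) := max(0, sup_{x∈X}(f(x) − f(y*) − F̂(x) + F̂(y*))). Assume for all i ∈ I: (C1−) Δ̂_i(0) + δ̂_i(y) ≤ γ and (C2−) Δ̂_i(0) ≤ −ε̂_i. Then X̂ ⊆ X. If in addition (P−) δ̂_i(y*) ≤ γ + ε̂_i for all i and (M−) Δ̂_0(y*|0) ≤ t − t_1 with t ≥ t_1 ≥ 0, then every x̂ ∈ X̂ with F̂(x̂) ≤ inf_{X̂} F̂ + t_1 satisfies f(x̂) ≤ f* + t + gap(γ), where f* := min_X f and gap(γ)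 := min_{X_{−γ}} f − f*. -/

import Mathlib

/-- Optimality deviation with interior approximation of a strictly feasible convex
set: under (C1−),(C2−) exact feasibility `X̂ ⊆ X` holds; additionally under
(P−),(M−), near-solutions of the perturbed problem are `(t + gap(γ))`-near
solutions of the original problem, where `gap(γ) = min_{X_{-γ}} f - f*`. -/
theorem stmt_4 {d : ℕ} {ι : Type*} [Fintype ι]
    (Y : Set (EuclideanSpace ℝ (Fin d))) (hYcl : IsClosed Y) (hYcon : Convex ℝ Y)
    (hYcp : IsCompact Y)
    (f Fh : ι → EuclideanSpace ℝ (Fin d) → ℝ)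
    (f0 F0 : EuclideanSpace ℝ (Fin d) → ℝ)
    (hfc : ∀ i, ContinuousOn (f i) Y) (hFc : ∀ i, ContinuousOn (Fh i) Y)
    (hfv : ∀ i, ConvexOn ℝ Y (f i)) (hFv : ∀ i, ConvexOn ℝ Y (Fh i))
    (hf0 : ContinuousOn f0 Y) (hF0 : ContinuousOn F0 Y)
    (εh : ι → ℝ) (γ : ℝ) (hγ : 0 < γ)
    (y : EuclideanSpace ℝ (Fin d)) (hy : y ∈ Y) (hyin : ∀ i, f i y < -γ)
    (ystar : EuclideanSpace ℝ (Fin d)) (hys : ystar ∈ {x ∈ Y | ∀ i, f i x ≤ -γ})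
    (hysmin : ∀ z ∈ {x ∈ Y | ∀ i, f i x ≤ -γ}, f0 ystar ≤ f0 z)
    (xstar : EuclideanSpace ℝ (Fin d)) (hxs : xstar ∈ {x ∈ Y | ∀ i, f i x ≤ 0})
    (hxsmin : ∀ z ∈ {x ∈ Y | ∀ i, f i x ≤ 0}, f0 xstar ≤ f0 z)
    (hC1 : ∀ i, max 0 (Fh i y - f i y) ≤ γ ∧
      ∀ x ∈ Y, (∀ j, f j x ≤ 0) → f i x = 0 → -Fh i x + max 0 (Fh i y - f i y) ≤ γ)
    (hC2 : ∀ i, 0 ≤ -εh i ∧ ∀ x ∈ Y, (∀ j, f j x ≤ 0) → f i x = 0 → -Fh i x ≤ -εh i) :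
    {x ∈ Y | ∀ i, Fh i x ≤ εh i} ⊆ {x ∈ Y | ∀ i, f i x ≤ 0} ∧
    ∀ t t1 : ℝ, 0 ≤ t1 → t1 ≤ t →
      (∀ i, max 0 (Fh i ystar - f i ystar) ≤ γ + εh i) →
      (∀ x ∈ Y, (∀ i, f i x ≤ 0) → f0 x - f0 ystar - (F0 x - F0 ystar) ≤ t - t1) →
      ∀ xh ∈ {x ∈ Y | ∀ i, Fh i x ≤ εh i},
        F0 xh ≤ sInf (F0 '' {x ∈ Y | ∀ i, Fh i x ≤ εh i}) + t1 →
        f0 xh ≤ f0 xstar + t + (f0 ystar - f0 xstar) := by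
  have key : {x ∈ Y | ∀ i, Fh i x ≤ εh i} ⊆ {x ∈ Y | ∀ i, f i x ≤ 0} := by
    rintro x ⟨hxY, hxF⟩
    refine ⟨hxY, ?_⟩
    by_contra hcon
    push_neg at hcon
    obtain ⟨i0, hi0⟩ := hcon
    haveI : Nonempty ι := ⟨i0⟩
    set p : ℝ → EuclideanSpace ℝ (Fin d) := fun l => (1 - l) • y + l • x with hp
    have hpY : ∀ l ∈ Set.Icc (0:ℝ) 1, p l ∈ Y := by
      intro l hl
      exact hYcon hy hxY (by linarith [hl.2]) hl.1 (by ring)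
    have hpc : Continuous p := by continuity
    set g : ℝ → ℝ := fun l => Finset.univ.sup' Finset.univ_nonempty (fun i => f i (p l)) with hg
    have hgc : ContinuousOn g (Set.Icc 0 1) := by
      apply ContinuousOn.finset_sup'_apply Finset.univ_nonempty
      intro i _
      exact ((hfc i).comp hpc.continuousOn hpY)
    have hg0 : g 0 < 0 := by
      apply (Finset.sup'_lt_iff _).2
      intro i _
      have : p 0 = y := by simp [hp]
      rw [this]
      linarith [hyin i]
    have hpx : p 1 = x := by simp [hp]
    have hg1 : 0 < g 1 := by
      calc (0:ℝ) < f i0 x := hi0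
        _ = f i0 (p 1) := by rw [hpx]
        _ ≤ g 1 := Finset.le_sup' (fun j => f j (p 1)) (Finset.mem_univ i0)
    obtain ⟨l0, hl0, hgl0⟩ := intermediate_value_Ioo (by norm_num : (0:ℝ) ≤ 1) hgc ⟨hg0, hg1⟩
    set z := p l0 with hz
    have hzY : z ∈ Y := hpY l0 ⟨le_of_lt hl0.1, le_of_lt hl0.2⟩
    have hzle : ∀ j, f j z ≤ 0 := by
      intro j
      calc f j z ≤ g l0 := Finset.le_sup' (fun j => f j (p l0)) (Finset.mem_univ j)
        _ = 0 := hgl0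
    obtain ⟨i, _, hieq⟩ := Finset.exists_mem_eq_sup' Finset.univ_nonempty (fun i => f i (p l0))
    have hiz : f i z = 0 := by rw [hz, ← hieq]; exact hgl0
    -- convexity bound on Fh i z
    have hconv : Fh i z ≤ (1 - l0) * Fh i y + l0 * Fh i x := by
      have := (hFv i).2 hy hxY (by linarith [hl0.2]) (le_of_lt hl0.1) (by ring : (1 - l0) + l0 = 1)
      simpa [hz, hp, smul_eq_mul] using this
    have hd : Fh i y - f i y ≤ max 0 (Fh i y - f i y) := le_max_right _ _
    have hC1z := (hC1 i).2 z hzY hzle hiz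
    have hylt : Fh i y < Fh i z := by
      have h1 : Fh i y ≤ f i y + max 0 (Fh i y - f i y) := by linarith
      have h2 : max 0 (Fh i y - f i y) - γ ≤ Fh i z := by linarith
      linarith [hyin i]
    have hxle : Fh i x ≤ Fh i z := le_trans (hxF i) (by linarith [(hC2 i).2 z hzY hzle hiz])
    nlinarith [hl0.1, hl0.2, hconv, hylt, hxle]
  refine ⟨key, ?_⟩
  intro t t1 ht1 htt1 hP hM xh hxh hnear
  obtain ⟨hxhY, hxhF⟩ := hxh
  have hysX : ystar ∈ {x ∈ Y | ∀ i, Fh i x ≤ εh i} := by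
    refine ⟨hys.1, fun i => ?_⟩
    have h1 : Fh i ystar - f i ystar ≤ γ + εh i := le_trans (le_max_right _ _) (hP i)
    linarith [hys.2 i]
  have hbdd : BddBelow (F0 '' {x ∈ Y | ∀ i, Fh i x ≤ εh i}) := by
    have : F0 '' {x ∈ Y | ∀ i, Fh i x ≤ εh i} ⊆ F0 '' Y :=
      Set.image_mono (fun x hx => hx.1)
    exact (BddBelow.mono this (hYcp.image_of_continuousOn hF0).bddBelow)
  have hinf : sInf (F0 '' {x ∈ Y | ∀ i, Fh i x ≤ εh i}) ≤ F0 ystar :=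
    csInf_le hbdd ⟨ystar, hysX, rfl⟩
  have hxhX := key ⟨hxhY, hxhF⟩
  have hMx := hM xh hxhX.1 hxhX.2
  linarith
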